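/- Let p : (0,∞) → ℝ be continuous with 0 < p(t) ≤ 1 for all t, and let y be a nontrivial C² solution of y'' + (1/t)y' + (1 − 9/(4t²) + 2(1 − p(t)²)/t²)y = 0 with y(t) ~ (1/3)√(2/π) t^{3/2} as t → 0⁺. If t₀ is the first positive zero of J_{3/2}, then y has a zero in (0, t₀], and moreover y attains strictly negative values on (0, t₁] for any t₁ > t₀ such that J_{3/2} < 0 on (t₀, t₁). -/

import Mathlib

open Real Set Filter Topology

lemma aux_w_deriv (c t : ℝ) (ht : t ≠ 0) :
    HasDerivAt (fun u => c * (Real.sin u / u - Real.cos u))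
      (c * (Real.cos t / t - Real.sin t / t ^ 2 + Real.sin t)) t := by
  have h := (((Real.hasDerivAt_sin t).div (hasDerivAt_id t) ht).sub
    (Real.hasDerivAt_cos t)).const_mul c
  refine h.congr_deriv ?_
  simp only [id_eq]
  field_simp
  ring

lemma aux_dw_deriv (c t : ℝ) (ht : t ≠ 0) :
    HasDerivAt (fun u => c * (Real.cos u / u - Real.sin u / u ^ 2 + Real.sin u))
      (-(1 - 2 / t ^ 2) * (c * (Real.sin t / t - Real.cos t))) t := by
  have h := ((((Real.hasDerivAt_cos t).div (hasDerivAt_id t) ht).sub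
    ((Real.hasDerivAt_sin t).div (hasDerivAt_pow 2 t) (pow_ne_zero 2 ht))).add
    (Real.hasDerivAt_sin t)).const_mul c
  refine h.congr_deriv ?_
  simp only [id_eq]
  field_simp
  ring

lemma aux_W_deriv (c : ℝ) (p y dy ddy : ℝ → ℝ) (t : ℝ) (ht : 0 < t)
    (h3 : HasDerivAt y (dy t) t) (h4 : HasDerivAt dy (ddy t) t)
    (hode : ddy t + (1 / t) * dy t
      + (1 - 9 / (4 * t ^ 2) + 2 * (1 - (p t) ^ 2) / t ^ 2) * y t = 0) :
    HasDerivAt (fun u => (c * (Real.cos u / u - Real.sin u / u ^ 2 + Real.sin u)) * (Real.sqrt u * y u)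
        - (c * (Real.sin u / u - Real.cos u)) * (y u / (2 * Real.sqrt u) + Real.sqrt u * dy u))
      (2 * (1 - (p t) ^ 2) / t ^ 2 * ((c * (Real.sin t / t - Real.cos t)) * (Real.sqrt t * y t))) t := by
  have hne : t ≠ 0 := ne_of_gt ht
  have hspos : 0 < Real.sqrt t := Real.sqrt_pos.2 ht
  have hsne : Real.sqrt t ≠ 0 := ne_of_gt hspos
  have hw := aux_w_deriv c t hne
  have hdw := aux_dw_deriv c t hne
  have hsq : HasDerivAt Real.sqrt (1 / (2 * Real.sqrt t)) t := Real.hasDerivAt_sqrt hne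
  have hv : HasDerivAt (fun u => Real.sqrt u * y u)
      (1 / (2 * Real.sqrt t) * y t + Real.sqrt t * dy t) t := hsq.mul h3
  have h2s : HasDerivAt (fun u => 2 * Real.sqrt u) (2 * (1 / (2 * Real.sqrt t))) t := hsq.const_mul 2
  have hq : HasDerivAt (fun u => y u / (2 * Real.sqrt u))
      ((dy t * (2 * Real.sqrt t) - y t * (2 * (1 / (2 * Real.sqrt t)))) / (2 * Real.sqrt t) ^ 2) t :=
    h3.div h2s (by positivity)
  have hu := hq.add (hsq.mul h4)
  have hW := (hdw.mul hv).sub (hw.mul hu)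
  refine hW.congr_deriv ?_
  simp only [Pi.add_apply, Pi.mul_apply]
  have hode' : ddy t = -(1 / t) * dy t
      - (1 - 9 / (4 * t ^ 2) + 2 * (1 - (p t) ^ 2) / t ^ 2) * y t := by linarith
  rw [hode']
  obtain ⟨s, hs0, rfl⟩ : ∃ s : ℝ, 0 < s ∧ s ^ 2 = t :=
    ⟨Real.sqrt t, hspos, Real.sq_sqrt ht.le⟩
  have hss : Real.sqrt (s ^ 2) = s := Real.sqrt_sq hs0.le
  rw [hss]
  have hsne' : s ≠ 0 := ne_of_gt hs0
  field_simp
  ring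


lemma aux_Wlower (c ξ S V : ℝ) (hc : 0 < c) (h0 : 0 < ξ) (h1 : ξ < 1)
    (hwnn : 0 ≤ c * (Real.sin ξ / ξ - Real.cos ξ))
    (hv0 : 0 ≤ V) (hvle : V ≤ (2/3) * c * ξ^2) (hS : S ≤ (8/3) * c * ξ) :
    -(3 * c^2 * ξ) ≤ (c * (Real.cos ξ / ξ - Real.sin ξ / ξ^2 + Real.sin ξ)) * V
      - (c * (Real.sin ξ / ξ - Real.cos ξ)) * S := by
  have hsin1 : Real.sin ξ < ξ := Real.sin_lt h0
  have hsin2 : ξ - ξ^3/4 < Real.sin ξ := by linarith [Real.sin_gt_sub_cube h0, pow_pos h0 3]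
  have hcos1 : 1 - ξ^2/2 ≤ Real.cos ξ := Real.one_sub_sq_div_two_le_cos
  have hcos2 : Real.cos ξ ≤ 1 := Real.cos_le_one ξ
  have hsp : 0 < Real.sin ξ := by nlinarith
  have hξ2 : (0:ℝ) < ξ^2 := by positivity
  have hwle : c * (Real.sin ξ / ξ - Real.cos ξ) ≤ (1/2) * c * ξ^2 := by
    have h1' : Real.sin ξ / ξ ≤ 1 := by rw [div_le_one h0]; exact hsin1.le
    have h2' : Real.sin ξ / ξ - Real.cos ξ ≤ (1/2) * ξ^2 := by linarith
    calc c * (Real.sin ξ / ξ - Real.cos ξ) ≤ c * ((1/2) * ξ^2) :=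
          mul_le_mul_of_nonneg_left h2' hc.le
      _ = (1/2) * c * ξ^2 := by ring
  have hdwge : -((3/2) * c * ξ) ≤ c * (Real.cos ξ / ξ - Real.sin ξ / ξ^2 + Real.sin ξ) := by
    have key : Real.cos ξ / ξ - Real.sin ξ / ξ^2 + Real.sin ξ - (-((3/2) * ξ))
        = (ξ * Real.cos ξ - Real.sin ξ + ξ^2 * Real.sin ξ + (3/2) * ξ^3) / ξ^2 := by
      field_simp
      ring
    have hg : -((3/2) * ξ) ≤ Real.cos ξ / ξ - Real.sin ξ / ξ^2 + Real.sin ξ := by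
      rw [← sub_nonneg, key]
      apply div_nonneg _ hξ2.le
      nlinarith [mul_nonneg (sq_nonneg ξ) hsp.le]
    calc -((3/2) * c * ξ) = c * (-((3/2) * ξ)) := by ring
      _ ≤ _ := mul_le_mul_of_nonneg_left hg hc.le
  have hξ3 : ξ^3 ≤ ξ := by nlinarith
  nlinarith [mul_nonneg (by linarith :
      (0:ℝ) ≤ c * (Real.cos ξ / ξ - Real.sin ξ / ξ^2 + Real.sin ξ) + (3/2) * c * ξ) hv0,
    mul_nonneg (by positivity : (0:ℝ) ≤ (3/2) * c * ξ)
      (by linarith : (0:ℝ) ≤ (2/3) * c * ξ^2 - V),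
    mul_nonneg hwnn (by linarith : (0:ℝ) ≤ (8/3) * c * ξ - S),
    mul_nonneg (by linarith : (0:ℝ) ≤ (1/2) * c * ξ^2 - c * (Real.sin ξ / ξ - Real.cos ξ))
      (by positivity : (0:ℝ) ≤ (8/3) * c * ξ),
    hξ3, sq_nonneg c, hc.le, h0.le]

lemma aux_Glower (C a x co Y D : ℝ) (ha : 0 < a) (hax : a ≤ x)
    (hcoup : co ≤ C) (hcolow : -C ≤ co) :
    0 ≤ (1 + C + 2/a) * (Y^2 + D^2) + 2 * Y * D - 2 * D^2 / x - 2 * co * Y * D := by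
  have hd4 : 2 * D^2 / x ≤ 2 * D^2 / a := by
    gcongr
  have h1 := mul_nonneg (sub_nonneg.2 hcoup) (sq_nonneg (Y + D))
  have h2 := mul_nonneg (by linarith : (0:ℝ) ≤ co + C) (sq_nonneg (Y - D))
  have h3 := sq_nonneg (Y + D)
  have h4 := mul_nonneg (by positivity : (0:ℝ) ≤ 2/a) (sq_nonneg Y)
  have key : (1 + C + 2/a) * (Y^2 + D^2) + 2 * Y * D - 2 * D^2 / x - 2 * co * Y * D
      = (1/2) * ((C - co) * (Y + D)^2) + (1/2) * ((co + C) * (Y - D)^2) + (Y + D)^2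
        + 2/a * Y^2 + (2 * D^2 / a - 2 * D^2 / x) := by
    ring
  rw [key]
  linarith

set_option maxHeartbeats 1000000 in
theorem stmt12 (p y : ℝ → ℝ) (hp : ContinuousOn p (Ioi 0))
    (hprange : ∀ t > (0 : ℝ), 0 < p t ∧ p t ≤ 1)
    (hy : ContDiffOn ℝ 2 y (Ioi 0))
    (hODE : ∀ t > (0 : ℝ), deriv (deriv y) t + (1 / t) * deriv y t
      + (1 - 9 / (4 * t ^ 2) + 2 * (1 - (p t) ^ 2) / t ^ 2) * y t = 0)
    (hasymp : Tendsto (fun t => y t / ((1 / 3) * Real.sqrt (2 / π) * t ^ ((3 : ℝ) / 2)))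
      (nhdsWithin 0 (Ioi 0)) (nhds 1))
    (J : ℝ → ℝ)
    (hJ : J = fun t => Real.sqrt (2 / (π * t)) * (Real.sin t / t - Real.cos t))
    (t₀ t₁ : ℝ) (ht₀ : 0 < t₀) (hJt₀ : J t₀ = 0)
    (hJpos : ∀ t ∈ Ioo 0 t₀, 0 < J t)
    (ht₁ : t₀ < t₁) (hJneg : ∀ t ∈ Ioo t₀ t₁, J t < 0) :
    (∃ t ∈ Ioc 0 t₀, y t = 0) ∧ (∃ t ∈ Ioc 0 t₁, y t < 0) := by
  have hπ : (0:ℝ) < π := Real.pi_pos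
  set c : ℝ := Real.sqrt (2 / π) with hc
  have hcpos : 0 < c := Real.sqrt_pos.2 (by positivity)
  set w : ℝ → ℝ := fun t => c * (Real.sin t / t - Real.cos t) with hwdef
  set dw : ℝ → ℝ := fun t => c * (Real.cos t / t - Real.sin t / t ^ 2 + Real.sin t) with hdwdef
  -- J versus w
  have hJw : ∀ t, 0 < t → Real.sqrt t * J t = w t := by
    intro t ht
    have hst : Real.sqrt t ≠ 0 := ne_of_gt (Real.sqrt_pos.2 ht)
    rw [hJ]
    show Real.sqrt t * (Real.sqrt (2 / (π * t)) * (Real.sin t / t - Real.cos t)) = _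
    rw [show (2 / (π * t)) = (2 / π) / t from (div_div 2 π t).symm,
      Real.sqrt_div (by positivity) t, ← hc]
    rw [hwdef]
    field_simp
  have hwt₀ : w t₀ = 0 := by
    rw [← hJw t₀ ht₀, hJt₀, mul_zero]
  have hwpos : ∀ t ∈ Ioo (0:ℝ) t₀, 0 < w t := by
    intro t ht
    rw [← hJw t ht.1]
    exact mul_pos (Real.sqrt_pos.2 ht.1) (hJpos t ht)
  -- derivatives of w
  have hwd : ∀ t : ℝ, t ≠ 0 → HasDerivAt w (dw t) t := fun t ht => aux_w_deriv c t ht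
  -- derivatives of y
  have hy1 : ∀ t : ℝ, 0 < t → HasDerivAt y (deriv y t) t := fun t ht =>
    ((hy.differentiableOn (by norm_num)).differentiableAt (isOpen_Ioi.mem_nhds ht)).hasDerivAt
  have hdyC : ContDiffOn ℝ 1 (deriv y) (Ioi 0) := hy.deriv_of_isOpen isOpen_Ioi (by norm_num)
  have hy2 : ∀ t : ℝ, 0 < t → HasDerivAt (deriv y) (deriv (deriv y) t) t := fun t ht =>
    ((hdyC.differentiableOn (by norm_num)).differentiableAt (isOpen_Ioi.mem_nhds ht)).hasDerivAt
  -- behaviour near 0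
  obtain ⟨δ, hδ0, hδ⟩ : ∃ δ > (0:ℝ), ∀ t ∈ Ioo (0:ℝ) δ,
      0 < y t ∧ y t ≤ (2/3) * c * (t * Real.sqrt t) := by
    have hmem : {t : ℝ | y t / ((1 / 3) * Real.sqrt (2 / π) * t ^ ((3 : ℝ) / 2)) ∈ Ioo (1/2 : ℝ) 2}
        ∈ 𝓝[>] (0:ℝ) := hasymp (Ioo_mem_nhds (by norm_num) (by norm_num))
    rw [mem_nhdsGT_iff_exists_Ioo_subset] at hmem
    obtain ⟨δ, hδ0, hsub⟩ := hmem
    refine ⟨δ, hδ0, fun t ht => ?_⟩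
    have hr := hsub ht
    simp only [mem_setOf_eq, mem_Ioo] at hr
    have ht0 : 0 < t := ht.1
    have hrw : t ^ ((3:ℝ)/2) = t * Real.sqrt t := by
      rw [show ((3:ℝ)/2) = 1 + 1/2 by norm_num, Real.rpow_add ht0, Real.rpow_one,
        Real.sqrt_eq_rpow]
    have hden : 0 < (1 / 3) * Real.sqrt (2 / π) * t ^ ((3 : ℝ) / 2) := by
      have : (0:ℝ) < t ^ ((3:ℝ)/2) := Real.rpow_pos_of_pos ht0 _
      have h2 : (0:ℝ) < Real.sqrt (2/π) := hcpos
      positivity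
    constructor
    · have h1 := (lt_div_iff₀ hden).1 hr.1
      nlinarith [hden]
    · have h2 := (div_lt_iff₀ hden).1 hr.2
      rw [hrw] at h2
      rw [hc]
      nlinarith [hden]
  -- the slope of w at t₀
  have hsincos : Real.sin t₀ = t₀ * Real.cos t₀ := by
    have h := hwt₀
    rw [hwdef] at h
    simp only at h
    have h2 : Real.sin t₀ / t₀ - Real.cos t₀ = 0 := by
      rcases mul_eq_zero.1 h with h' | h'
      · exact absurd h' (ne_of_gt hcpos)
      · exact h'
    field_simp at h2
    linarith
  have hsinne : Real.sin t₀ ≠ 0 := by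
    intro h
    have hcos : Real.cos t₀ = 0 := by
      have := hsincos
      rw [h] at this
      rcases mul_eq_zero.1 this.symm with h' | h'
      · exact absurd h' (ne_of_gt ht₀)
      · exact h'
    have := Real.sin_sq_add_cos_sq t₀
    rw [h, hcos] at this
    norm_num at this
  have hdwt₀ : dw t₀ = c * Real.sin t₀ := by
    rw [hdwdef]
    simp only
    rw [hsincos]
    field_simp
    ring
  have hdwle : dw t₀ ≤ 0 := by
    have hslope : Tendsto (slope w t₀) (𝓝[<] t₀) (𝓝 (dw t₀)) :=
      (hasDerivAt_iff_tendsto_slope.1 (hwd t₀ (ne_of_gt ht₀))).mono_left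
        (nhdsWithin_mono _ (fun x hx => ne_of_lt hx))
    refine le_of_tendsto hslope ?_
    filter_upwards [Ioo_mem_nhdsLT_of_mem (⟨ht₀, le_refl t₀⟩ : t₀ ∈ Ioc 0 t₀)] with x hx
    rw [slope_def_field, hwt₀]
    have h1 : 0 < w x := hwpos x hx
    have h2 : x - t₀ < 0 := by linarith [hx.2]
    rw [div_nonpos_iff]
    left
    constructor
    · linarith
    · linarith
  have hdwt₀neg : dw t₀ < 0 := by
    rcases lt_or_eq_of_le hdwle with h | h
    · exact h
    · exfalso
      rw [hdwt₀] at h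
      exact hsinne (by
        rcases mul_eq_zero.1 h with h' | h'
        · exact absurd h' (ne_of_gt hcpos)
        · exact h')
  -- Claim A
  have claimA : ∃ t ∈ Ioc 0 t₀, y t = 0 := by
    by_contra hA
    push_neg at hA
    -- positivity of y on (0, t₀]
    have hypos : ∀ t ∈ Ioc (0:ℝ) t₀, 0 < y t := by
      intro t ht
      rcases lt_trichotomy (y t) 0 with hneg | hzero | hpos
      · exfalso
        set a : ℝ := min δ t / 2 with hadef
        have ha0 : 0 < a := by
          have := lt_min hδ0 ht.1
          positivity
        have haδ : a < δ := by
          have h1 : a ≤ δ / 2 := by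
            rw [hadef]
            have := min_le_left δ t
            linarith
          linarith
        have hat : a < t := by
          have h1 : a ≤ t / 2 := by
            rw [hadef]
            have := min_le_right δ t
            linarith
          linarith [ht.1]
        have hya : 0 < y a := (hδ a ⟨ha0, haδ⟩).1
        have hcont : ContinuousOn y (Icc a t) :=
          hy.continuousOn.mono (fun x hx => lt_of_lt_of_le ha0 hx.1)
        have h0mem : (0:ℝ) ∈ Icc (y t) (y a) := ⟨hneg.le, hya.le⟩
        obtain ⟨z, hz, hyz⟩ := intermediate_value_Icc' hat.le hcont h0mem
        exact hA z ⟨lt_of_lt_of_le ha0 hz.1, le_trans hz.2 ht.2⟩ hyz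
      · exact absurd hzero (hA t ht)
      · exact hpos
    -- the Wronskian
    set W : ℝ → ℝ := fun u => dw u * (Real.sqrt u * y u)
      - w u * (y u / (2 * Real.sqrt u) + Real.sqrt u * deriv y u) with hWdef
    have hWd : ∀ t : ℝ, 0 < t → HasDerivAt W
        (2 * (1 - (p t) ^ 2) / t ^ 2 * (w t * (Real.sqrt t * y t))) t := by
      intro t ht
      exact aux_W_deriv c p y (deriv y) (deriv (deriv y)) t ht (hy1 t ht) (hy2 t ht) (hODE t ht)
    -- monotonicity
    have hWmono : ∀ ξ ∈ Ioo (0:ℝ) t₀, W ξ ≤ W t₀ := by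
      intro ξ hξ
      have hmono : MonotoneOn W (Icc ξ t₀) := by
        apply monotoneOn_of_deriv_nonneg (convex_Icc ξ t₀)
        · exact fun x hx => ((hWd x (lt_of_lt_of_le hξ.1 hx.1)).continuousAt).continuousWithinAt
        · rw [interior_Icc]
          exact fun x hx => ((hWd x (lt_trans hξ.1 hx.1)).differentiableAt).differentiableWithinAt
        · rw [interior_Icc]
          intro x hx
          have hx0 : 0 < x := lt_trans hξ.1 hx.1
          rw [(hWd x hx0).deriv]
          have hpx := hprange x hx0
          have hq : 0 ≤ 2 * (1 - (p x) ^ 2) / x ^ 2 := by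
            apply div_nonneg _ (sq_nonneg x)
            nlinarith [hpx.1, hpx.2]
          exact mul_nonneg hq (mul_nonneg (hwpos x ⟨hx0, hx.2⟩).le
            (mul_nonneg (Real.sqrt_nonneg x) (hypos x ⟨hx0, hx.2.le⟩).le))
      exact hmono ⟨le_refl ξ, hξ.2.le⟩ ⟨hξ.2.le, le_refl t₀⟩ hξ.2.le
    have hWt₀neg : W t₀ < 0 := by
      rw [hWdef]
      simp only
      rw [hwt₀]
      have hyt₀ : 0 < y t₀ := hypos t₀ ⟨ht₀, le_refl t₀⟩
      have hst₀ : 0 < Real.sqrt t₀ := Real.sqrt_pos.2 ht₀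
      have := mul_neg_of_neg_of_pos hdwt₀neg (mul_pos hst₀ hyt₀)
      linarith
    -- choose a small point
    set A : ℝ := -W t₀ with hAdef
    have hApos : 0 < A := by rw [hAdef]; linarith
    set m : ℝ := min δ (min t₀ (min 1 (A / (3 * c ^ 2)))) with hmdef
    have hm0 : 0 < m := lt_min hδ0 (lt_min ht₀ (lt_min one_pos (by positivity)))
    set ε : ℝ := m / 4 with hεdef
    have hε0 : 0 < ε := by positivity
    have h2εm : 2 * ε < m := by rw [hεdef]; linarith
    -- MVT for sqrt * y on [ε, 2ε]
    have hcont : ContinuousOn (fun u => Real.sqrt u * y u) (Icc ε (2*ε)) := by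
      apply ContinuousOn.mul Real.continuous_sqrt.continuousOn
      exact hy.continuousOn.mono (fun x hx => lt_of_lt_of_le hε0 hx.1)
    have hderiv : ∀ x ∈ Ioo ε (2*ε), HasDerivAt (fun u => Real.sqrt u * y u)
        (y x / (2 * Real.sqrt x) + Real.sqrt x * deriv y x) x := by
      intro x hx
      have hx0 : 0 < x := lt_trans hε0 hx.1
      have h := (Real.hasDerivAt_sqrt (ne_of_gt hx0)).mul (hy1 x hx0)
      refine h.congr_deriv ?_
      ring
    obtain ⟨ξ, hξmem, hξeq⟩ := exists_hasDerivAt_eq_slope (fun u => Real.sqrt u * y u)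
      (fun x => y x / (2 * Real.sqrt x) + Real.sqrt x * deriv y x) (by linarith) hcont hderiv
    -- properties of ξ
    have hξ0 : 0 < ξ := lt_trans hε0 hξmem.1
    have hξ2ε : ξ < 2 * ε := hξmem.2
    have hξm : ξ < m := lt_trans hξ2ε h2εm
    have hξδ : ξ < δ := lt_of_lt_of_le hξm (min_le_left _ _)
    have hξt₀ : ξ < t₀ := lt_of_lt_of_le hξm (le_trans (min_le_right _ _) (min_le_left _ _))
    have hξ1 : ξ < 1 := lt_of_lt_of_le hξm
      (le_trans (min_le_right _ _) (le_trans (min_le_right _ _) (min_le_left _ _)))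
    have hξA : 3 * c ^ 2 * ξ < A := by
      have h1 : ξ < A / (3 * c ^ 2) := lt_of_lt_of_le hξm
        (le_trans (min_le_right _ _) (le_trans (min_le_right _ _) (min_le_right _ _)))
      have h2 : (0:ℝ) < 3 * c ^ 2 := by positivity
      calc 3 * c ^ 2 * ξ < 3 * c ^ 2 * (A / (3 * c ^ 2)) := by
            exact mul_lt_mul_of_pos_left h1 h2
        _ = A := by field_simp
    -- beta-reduced MVT conclusion
    have hξeq' : y ξ / (2 * Real.sqrt ξ) + Real.sqrt ξ * deriv y ξ
        = (Real.sqrt (2*ε) * y (2*ε) - Real.sqrt ε * y ε) / (2*ε - ε) := hξeq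
    have hsv : Real.sqrt ξ * Real.sqrt ξ = ξ := Real.mul_self_sqrt hξ0.le
    have hmδ : m ≤ δ := min_le_left _ _
    have h2ε0 : (0:ℝ) < 2 * ε := by linarith
    have h2εδ : 2 * ε < δ := by linarith
    have hy2ε := (hδ (2*ε) ⟨h2ε0, h2εδ⟩).2
    have hyεpos := (hδ ε ⟨hε0, by linarith⟩).1
    have hs2ε : Real.sqrt (2*ε) * Real.sqrt (2*ε) = 2*ε := Real.mul_self_sqrt h2ε0.le
    -- bound on the slope term
    have hslope_le : y ξ / (2 * Real.sqrt ξ) + Real.sqrt ξ * deriv y ξ ≤ (8/3) * c * ξ := by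
      rw [hξeq', show 2*ε - ε = ε from by ring]
      rw [div_le_iff₀ hε0]
      have h1 : Real.sqrt (2*ε) * y (2*ε)
          ≤ Real.sqrt (2*ε) * ((2/3) * c * ((2*ε) * Real.sqrt (2*ε))) :=
        mul_le_mul_of_nonneg_left hy2ε (Real.sqrt_nonneg _)
      have h2 : Real.sqrt (2*ε) * ((2/3) * c * ((2*ε) * Real.sqrt (2*ε))) = (8/3) * c * ε^2 := by
        linear_combination ((4/3) * c * ε) * hs2ε
      have h3 : 0 ≤ Real.sqrt ε * y ε := mul_nonneg (Real.sqrt_nonneg _) hyεpos.le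
      have hεξ : ε ≤ ξ := hξmem.1.le
      have h4 := mul_le_mul_of_nonneg_right hεξ
        (mul_nonneg (mul_nonneg (by norm_num : (0:ℝ) ≤ 8/3) hcpos.le) hε0.le)
      have h5 : (8/3) * c * ε^2 ≤ (8/3) * c * ξ * ε := by
        calc (8/3) * c * ε^2 = ε * (8/3 * c * ε) := by ring
          _ ≤ ξ * (8/3 * c * ε) := h4
          _ = (8/3) * c * ξ * ε := by ring
      linarith
    have hwξpos : 0 < w ξ := hwpos ξ ⟨hξ0, hξt₀⟩
    have hyξ := hδ ξ ⟨hξ0, hξδ⟩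
    have hvξ0 : 0 ≤ Real.sqrt ξ * y ξ := mul_nonneg (Real.sqrt_nonneg _) hyξ.1.le
    have hvξle : Real.sqrt ξ * y ξ ≤ (2/3) * c * ξ^2 := by
      have h := mul_le_mul_of_nonneg_left hyξ.2 (Real.sqrt_nonneg ξ)
      have h2 : Real.sqrt ξ * ((2/3) * c * (ξ * Real.sqrt ξ)) = (2/3) * c * ξ^2 := by
        linear_combination ((2/3) * c * ξ) * hsv
      linarith
    -- lower bound on W ξ
    have hWξ : -(3 * c^2 * ξ) ≤ W ξ :=
      aux_Wlower c ξ (y ξ / (2 * Real.sqrt ξ) + Real.sqrt ξ * deriv y ξ) (Real.sqrt ξ * y ξ)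
        hcpos hξ0 hξ1 hwξpos.le hvξ0 hvξle hslope_le
    -- contradiction
    have hmain := hWmono ξ ⟨hξ0, hξt₀⟩
    have hWt₀A : W t₀ = -A := by rw [hAdef]; ring
    linarith
  refine ⟨claimA, ?_⟩
  by_contra hB
  push_neg at hB
  obtain ⟨ts, hts, hyts⟩ := claimA
  have hts0 : 0 < ts := hts.1
  have hts1 : ts < t₁ := lt_of_le_of_lt hts.2 ht₁
  have hlocmin : IsLocalMin y ts := by
    have hnb : Ioo (0:ℝ) t₁ ∈ 𝓝 ts := Ioo_mem_nhds hts0 hts1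
    filter_upwards [hnb] with u hu
    rw [hyts]
    exact hB u ⟨hu.1, hu.2.le⟩
  have hdyts : deriv y ts = 0 := hlocmin.deriv_eq_zero
  set a : ℝ := min δ ts / 2 with hadef
  have hminpos : 0 < min δ ts := lt_min hδ0 hts0
  have ha0 : 0 < a := by rw [hadef]; positivity
  have haδ : a < δ := by
    have := min_le_left δ ts
    rw [hadef]; linarith
  have hats : a < ts := by
    have := min_le_right δ ts
    rw [hadef]; linarith
  have hya : 0 < y a := (hδ a ⟨ha0, haδ⟩).1
  set C : ℝ := 1 + 9/(4*a^2) + 2/a^2 with hCdef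
  set K : ℝ := 1 + C + 2/a with hKdef
  set G : ℝ → ℝ := fun u => Real.exp (K*u) * (y u^2 + (deriv y u)^2) with hGdef
  have hGd : ∀ x : ℝ, 0 < x → HasDerivAt G
      (K * Real.exp (K*x) * (y x^2 + (deriv y x)^2)
        + Real.exp (K*x) * (2 * y x * deriv y x + 2 * deriv y x * deriv (deriv y) x)) x := by
    intro x hx
    have he : HasDerivAt (fun u : ℝ => Real.exp (K*u)) (Real.exp (K*x) * K) x := by
      simpa using ((hasDerivAt_id x).const_mul K).exp
    have hE : HasDerivAt (fun u => y u^2 + (deriv y u)^2)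
        (2 * y x * deriv y x + 2 * deriv y x * deriv (deriv y) x) x := by
      have h1 := (hy1 x hx).pow 2
      have h2 := (hy2 x hx).pow 2
      have h := h1.add h2
      refine h.congr_deriv ?_
      ring
    have h := he.mul hE
    refine h.congr_deriv ?_
    ring
  have hmono : MonotoneOn G (Icc a ts) := by
    apply monotoneOn_of_deriv_nonneg (convex_Icc a ts)
    · exact fun x hx => ((hGd x (lt_of_lt_of_le ha0 hx.1)).continuousAt).continuousWithinAt
    · rw [interior_Icc]
      exact fun x hx => ((hGd x (lt_trans ha0 hx.1)).differentiableAt).differentiableWithinAt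
    · rw [interior_Icc]
      intro x hx
      have hx0 : 0 < x := lt_trans ha0 hx.1
      have hax : a ≤ x := hx.1.le
      rw [(hGd x hx0).deriv]
      have hode' : deriv (deriv y) x = -(1/x) * deriv y x
          - (1 - 9/(4*x^2) + 2*(1-(p x)^2)/x^2) * y x := by linarith [hODE x hx0]
      rw [hode']
      have hpx := hprange x hx0
      have hx2 : a^2 ≤ x^2 := by
        have := mul_le_mul_of_nonneg_left hax ha0.le
        have := mul_le_mul_of_nonneg_right hax (lt_of_lt_of_le ha0 hax).le
        nlinarith [this]
      have ha2 : (0:ℝ) < a^2 := by positivity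
      have hp2' : (p x)^2 ≤ 1 := by nlinarith [hpx.1, hpx.2]
      have hb1 : 2*(1-(p x)^2)/x^2 ≤ 2/a^2 := by
        calc 2*(1-(p x)^2)/x^2 ≤ 2/x^2 := by
              gcongr
              linarith [sq_nonneg (p x)]
          _ ≤ 2/a^2 := by gcongr
      have hb0 : 0 ≤ 2*(1-(p x)^2)/x^2 := div_nonneg (by linarith) (sq_nonneg x)
      have hb2 : 9/(4*x^2) ≤ 9/(4*a^2) := by gcongr
      have h9 : 0 ≤ 9/(4*x^2) := by positivity
      have hcoup : 1 - 9/(4*x^2) + 2*(1-(p x)^2)/x^2 ≤ C := by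
        rw [hCdef]
        have : (0:ℝ) ≤ 9/(4*a^2) := by positivity
        linarith
      have hcolow : -C ≤ 1 - 9/(4*x^2) + 2*(1-(p x)^2)/x^2 := by
        rw [hCdef]
        have : (0:ℝ) ≤ 2/a^2 := by positivity
        linarith
      set co : ℝ := 1 - 9/(4*x^2) + 2*(1-(p x)^2)/x^2 with hco
      have hfact : K * Real.exp (K*x) * (y x^2 + (deriv y x)^2)
          + Real.exp (K*x) * (2 * y x * deriv y x
            + 2 * deriv y x * (-(1/x) * deriv y x - co * y x))
          = Real.exp (K*x) * (K * (y x^2 + (deriv y x)^2) + 2 * y x * deriv y x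
            - 2*(deriv y x)^2/x - 2 * co * y x * deriv y x) := by
        ring
      rw [hfact]
      apply mul_nonneg (Real.exp_pos _).le
      rw [hKdef]
      exact aux_Glower C a x co (y x) (deriv y x) ha0 hax hcoup hcolow
  have hle := hmono ⟨le_refl a, hats.le⟩ ⟨hats.le, le_refl ts⟩ hats.le
  have hGts : G ts = 0 := by
    rw [hGdef]
    simp only
    rw [hyts, hdyts]
    ring
  have hGa : 0 < G a := by
    rw [hGdef]
    simp only
    apply mul_pos (Real.exp_pos _)
    have := pow_pos hya 2
    have := sq_nonneg (deriv y a)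
    linarith
  rw [hGts] at hle
  linarith
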